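/- arXiv:2003.12731 — 2 statements merged into one kernel-verified Lean document; each statement's English description precedes it below -/
import Mathlib

section
/- For a prime $p$, define $S_j^*(p,a) = \sum_{\substack{m=1 \\ p \nmid m}}^{p} e(am^j/p)$. If $p \nmid a$, then $|S_j^*(p,a)| \leq ((j, p-1) - 1)\sqrt{p} + 1$. -/
open Finset Polynomial

section Stmt7Aux

variable {p : ℕ} [Fact p.Prime]



lemma aux_conj_stdAddChar (x : ZMod p) :
    (starRingEnd ℂ) (ZMod.stdAddChar x) = (ZMod.stdAddChar (N := p))⁻¹ x := by
  rw [AddChar.inv_apply', ← Complex.inv_eq_conj]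
  rw [ZMod.stdAddChar_apply]
  exact Circle.norm_coe _

lemma aux_abs_gaussSum {χ : MulChar (ZMod p) ℂ} (hχ : χ ≠ 1) :
    ‖gaussSum χ ZMod.stdAddChar‖ = Real.sqrt p := by
  have hconj : (starRingEnd ℂ) (gaussSum χ ZMod.stdAddChar)
      = gaussSum χ⁻¹ (ZMod.stdAddChar (N := p))⁻¹ := by
    rw [gaussSum, map_sum, gaussSum]
    refine Finset.sum_congr rfl fun x _ => ?_
    rw [map_mul, ← MulChar.star_apply', aux_conj_stdAddChar]
    rfl
  have hmul := gaussSum_mul_gaussSum_eq_card hχ (ZMod.isPrimitive_stdAddChar p)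
  rw [← hconj, Complex.mul_conj] at hmul
  have h2 : Complex.normSq (gaussSum χ ZMod.stdAddChar) = (p : ℝ) := by
    have := congrArg Complex.re hmul
    simpa [ZMod.card] using this
  rw [Complex.norm_def, h2]

lemma aux_front (p : ℕ) [Fact p.Prime] (j : ℕ) (a : ℤ) :
    (∑ m ∈ (Finset.Icc 1 p).filter (fun m => ¬ p ∣ m),
        Complex.exp (2 * Real.pi * Complex.I * (a * m ^ j / p)))
      = ∑ x : (ZMod p)ˣ, ZMod.stdAddChar ((a : ZMod p) * (x : ZMod p) ^ j) := by
  refine Finset.sum_bij (fun m hm => ZMod.unitOfCoprime m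
    (Nat.Coprime.symm (((Fact.out : p.Prime).coprime_iff_not_dvd).mpr
      (Finset.mem_filter.mp hm).2))) (fun _ _ => mem_univ _) ?_ ?_ ?_
  · intro m1 hm1 m2 hm2 h
    have h1 := Finset.mem_filter.mp hm1
    have h2 := Finset.mem_filter.mp hm2
    have hlt1 : m1 < p := lt_of_le_of_ne (Finset.mem_Icc.mp h1.1).2
      (fun he => h1.2 (he ▸ dvd_refl p))
    have hlt2 : m2 < p := lt_of_le_of_ne (Finset.mem_Icc.mp h2.1).2
      (fun he => h2.2 (he ▸ dvd_refl p))
    have := congrArg (fun u : (ZMod p)ˣ => (u : ZMod p)) h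
    simp only [ZMod.coe_unitOfCoprime] at this
    have := congrArg ZMod.val this
    rwa [ZMod.val_cast_of_lt hlt1, ZMod.val_cast_of_lt hlt2] at this
  · intro x _
    have hx0 : (x : ZMod p) ≠ 0 := Units.ne_zero x
    set m := (x : ZMod p).val with hm
    have hm0 : m ≠ 0 := fun h => hx0 (ZMod.val_eq_zero _ |>.mp h)
    have hmlt : m < p := ZMod.val_lt _
    have hnd : ¬ p ∣ m := fun h => hm0 (Nat.eq_zero_of_dvd_of_lt h hmlt)
    refine ⟨m, Finset.mem_filter.mpr ⟨Finset.mem_Icc.mpr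
      ⟨Nat.one_le_iff_ne_zero.mpr hm0, le_of_lt hmlt⟩, hnd⟩, ?_⟩
    apply Units.ext
    simp [ZMod.coe_unitOfCoprime, hm, ZMod.natCast_val, ZMod.cast_id]
  · intro m hm
    rw [ZMod.coe_unitOfCoprime]
    have hcast : (a : ZMod p) * (m : ZMod p) ^ j = (((a * m ^ j : ℤ)) : ZMod p) := by
      push_cast; ring
    rw [hcast, ZMod.stdAddChar_coe]
    congr 1
    push_cast
    ring

lemma aux_image {j d : ℕ} {g : (ZMod p)ˣ} (hg : ∀ x : (ZMod p)ˣ, x ∈ Subgroup.zpowers g)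
    {χ₀ : MulChar (ZMod p) ℂ} {ζ : ℂ} (hζ : IsPrimitiveRoot ζ d)
    (hχ₀g : χ₀ ↑g = ζ) (hχ₀d : χ₀ ^ d = 1) (hdj : d ∣ j) (hdeq : d = Nat.gcd j (p - 1))
    (hgord : orderOf g = p - 1) :
    (Finset.univ.image (fun x : (ZMod p)ˣ => x ^ j))
      = Finset.univ.filter (fun y : (ZMod p)ˣ => χ₀ ↑y = 1) := by
  have hgn : g ^ ((p - 1 : ℕ) : ℤ) = 1 := by
    rw [zpow_natCast, ← hgord, pow_orderOf_eq_one]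
  ext y
  simp only [Finset.mem_image, Finset.mem_filter, Finset.mem_univ, true_and]
  constructor
  · rintro ⟨x, rfl⟩
    rw [Units.val_pow_eq_pow_val, map_pow]
    obtain ⟨c, rfl⟩ := hdj
    rw [pow_mul, ← MulChar.pow_apply_coe, hχ₀d, MulChar.one_apply_coe, one_pow]
  · intro h
    obtain ⟨t, rfl⟩ := Subgroup.mem_zpowers_iff.mp (hg y)
    have hWy : χ₀ ↑(g ^ t) = ζ ^ t := by
      rw [← MulChar.coe_toUnitHom, map_zpow, Units.val_zpow_eq_zpow_val,
        MulChar.coe_toUnitHom, hχ₀g]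
    rw [hWy] at h
    obtain ⟨s, hs⟩ := (hζ.zpow_eq_one_iff_dvd t).mp h
    set u : ℤ := Nat.gcdA j (p - 1) with hu
    set v : ℤ := Nat.gcdB j (p - 1) with hv
    have hbez : (d : ℤ) = j * u + ((p - 1 : ℕ) : ℤ) * v := by
      rw [hdeq]
      exact_mod_cast Nat.gcd_eq_gcd_ab j (p - 1)
    refine ⟨g ^ (u * s), ?_⟩
    rw [← zpow_natCast (g ^ (u * s)) j, ← zpow_mul]
    have harith : u * s * (j : ℤ) = t + ((p - 1 : ℕ) : ℤ) * (-(v * s)) := by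
      rw [hs]
      linear_combination (-s) * hbez
    rw [harith, zpow_add, zpow_mul, hgn, one_zpow, mul_one]

lemma aux_ker_card {j d : ℕ} (hd0 : 0 < d) (hdeq : d = Nat.gcd j (p - 1)) :
    (Finset.univ.filter (fun x : (ZMod p)ˣ => x ^ j = 1)).card = d := by
  classical
  have hcard : Fintype.card (ZMod p)ˣ = p - 1 := ZMod.card_units p
  -- reduce j to d
  have hiff : ∀ x : (ZMod p)ˣ, x ^ j = 1 ↔ x ^ d = 1 := by
    intro x
    rw [hdeq, pow_gcd_eq_one, ← hcard, pow_card_eq_one, eq_self_iff_true, and_true]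
  rw [Finset.filter_congr (fun x _ => by rw [hiff x])]
  -- primitive d-th root in ZMod p
  obtain ⟨g, hg⟩ := IsCyclic.exists_generator (α := (ZMod p)ˣ)
  have hgord : orderOf g = p - 1 := by
    rw [orderOf_eq_card_of_forall_mem_zpowers hg, Nat.card_eq_fintype_card, hcard]
  have hdn : d ∣ p - 1 := hdeq ▸ Nat.gcd_dvd_right j (p - 1)
  have hn0 : p - 1 ≠ 0 := by have := (Fact.out : p.Prime).two_le; omega
  have hord2 : orderOf (g ^ ((p - 1) / d)) = d := by
    rw [orderOf_pow, hgord, Nat.gcd_eq_right (Nat.div_dvd_of_dvd hdn),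
      Nat.div_div_self hdn hn0]
  have hprim : IsPrimitiveRoot ((g ^ ((p - 1) / d) : (ZMod p)ˣ) : ZMod p) d := by
    have h1 := IsPrimitiveRoot.orderOf (g ^ ((p - 1) / d))
    rw [hord2] at h1
    exact IsPrimitiveRoot.coe_units_iff.mpr h1
  have hbij : (Finset.univ.filter (fun x : (ZMod p)ˣ => x ^ d = 1)).card
      = (Polynomial.nthRootsFinset d (1 : ZMod p)).card := by
    refine Finset.card_bij (fun x _ => (x : ZMod p)) ?_ ?_ ?_
    · intro x hx
      rw [Polynomial.mem_nthRootsFinset hd0 (1 : ZMod p), ← Units.val_pow_eq_pow_val,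
        (Finset.mem_filter.mp hx).2, Units.val_one]
    · intro x _ y _ h; exact Units.ext h
    · intro z hz
      have hz1 : z ^ d = 1 := (Polynomial.mem_nthRootsFinset hd0 (1 : ZMod p)).mp hz
      have hzu : IsUnit z := IsUnit.of_mul_eq_one (a := z) (z ^ (d - 1)) (by
        rw [← pow_succ']
        rwa [Nat.sub_add_cancel hd0])
      refine ⟨hzu.unit, Finset.mem_filter.mpr ⟨Finset.mem_univ _, ?_⟩, rfl⟩
      apply Units.ext
      rw [Units.val_pow_eq_pow_val, IsUnit.unit_spec, hz1, Units.val_one]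
  rw [hbij, hprim.card_nthRootsFinset]

lemma aux_fiber_card {j d : ℕ} (hd0 : 0 < d) (hdeq : d = Nat.gcd j (p - 1))
    (x₀ : (ZMod p)ˣ) :
    (Finset.univ.filter (fun x : (ZMod p)ˣ => x ^ j = x₀ ^ j)).card = d := by
  classical
  rw [← aux_ker_card hd0 hdeq]
  refine Finset.card_bij (fun x _ => x * x₀⁻¹) ?_ ?_ ?_
  · intro x hx
    have h1 := (Finset.mem_filter.mp hx).2
    refine Finset.mem_filter.mpr ⟨Finset.mem_univ _, ?_⟩
    rw [mul_pow, h1, inv_pow, mul_inv_cancel]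
  · intro x _ y _ h
    exact mul_right_cancel h
  · intro z hz
    have h1 := (Finset.mem_filter.mp hz).2
    refine ⟨z * x₀, Finset.mem_filter.mpr ⟨Finset.mem_univ _, ?_⟩, ?_⟩
    · rw [mul_pow, h1, one_mul]
    · show z * x₀ * x₀⁻¹ = z
      exact mul_inv_cancel_right z x₀

lemma aux_key {j d : ℕ} {g : (ZMod p)ˣ} (hg : ∀ x : (ZMod p)ˣ, x ∈ Subgroup.zpowers g)
    {χ₀ : MulChar (ZMod p) ℂ} {ζ : ℂ} (hζ : IsPrimitiveRoot ζ d)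
    (hχ₀g : χ₀ ↑g = ζ) (hχ₀d : χ₀ ^ d = 1) (hd0 : 0 < d) (hdj : d ∣ j)
    (hdeq : d = Nat.gcd j (p - 1)) (hgord : orderOf g = p - 1) (b : ZMod p) :
    (∑ x : (ZMod p)ˣ, ZMod.stdAddChar (b * (x : ZMod p) ^ j))
      = ∑ k ∈ Finset.range d, ∑ x : (ZMod p)ˣ,
          (χ₀ ^ k) (x : ZMod p) * ZMod.stdAddChar (b * (x : ZMod p)) := by
  classical
  -- RHS
  rw [Finset.sum_comm]
  have hrhs : ∀ x : (ZMod p)ˣ,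
      (∑ k ∈ Finset.range d, (χ₀ ^ k) (x : ZMod p) * ZMod.stdAddChar (b * (x : ZMod p)))
      = (if χ₀ ↑x = 1 then (d : ℂ) * ZMod.stdAddChar (b * (x : ZMod p)) else 0) := by
    intro x
    rw [← Finset.sum_mul]
    have hgeom : (∑ k ∈ Finset.range d, (χ₀ ^ k) (x : ZMod p))
        = if χ₀ ↑x = 1 then (d : ℂ) else 0 := by
      have hterm : ∀ k, (χ₀ ^ k) (x : ZMod p) = (χ₀ ↑x) ^ k := fun k =>
        MulChar.pow_apply_coe χ₀ k x
      rw [Finset.sum_congr rfl (fun k _ => hterm k)]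
      split_ifs with h
      · simp [h]
      · have hxd : (χ₀ ↑x) ^ d = 1 := by
          rw [← MulChar.pow_apply_coe, hχ₀d, MulChar.one_apply_coe]
        rw [geom_sum_eq h, hxd, sub_self, zero_div]
    rw [hgeom]
    split_ifs with h
    · rfl
    · rw [zero_mul]
  rw [Finset.sum_congr rfl (fun x _ => hrhs x), Finset.sum_ite, Finset.sum_const_zero,
    add_zero]
  -- LHS
  have hlhs : (∑ x : (ZMod p)ˣ, ZMod.stdAddChar (b * (x : ZMod p) ^ j))
      = ∑ x : (ZMod p)ˣ, (fun y : (ZMod p)ˣ => ZMod.stdAddChar (b * (y : ZMod p))) (x ^ j) := by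
    refine Finset.sum_congr rfl fun x _ => ?_
    simp [Units.val_pow_eq_pow_val]
  rw [hlhs, Finset.sum_comp (fun y : (ZMod p)ˣ => ZMod.stdAddChar (b * (y : ZMod p)))
    (fun x : (ZMod p)ˣ => x ^ j), aux_image hg hζ hχ₀g hχ₀d hdj hdeq hgord]
  refine Finset.sum_congr rfl fun y hy => ?_
  have hy' : y ∈ Finset.univ.image (fun x : (ZMod p)ˣ => x ^ j) := by
    rw [aux_image hg hζ hχ₀g hχ₀d hdj hdeq hgord]; exact hy
  obtain ⟨x₀, -, rfl⟩ := Finset.mem_image.mp hy'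
  rw [aux_fiber_card hd0 hdeq x₀, nsmul_eq_mul]

lemma aux_abs_char_sum {χ : MulChar (ZMod p) ℂ} (hχ : χ ≠ 1) {b : ZMod p} (hb : b ≠ 0) :
    ‖∑ x : ZMod p, χ x * ZMod.stdAddChar (b * x)‖ = Real.sqrt p := by
  have h : (∑ x : ZMod p, χ x * ZMod.stdAddChar (b * x))
      = gaussSum χ (AddChar.mulShift ZMod.stdAddChar b) := by
    simp [gaussSum, AddChar.mulShift_apply]
  set bu : (ZMod p)ˣ := Units.mk0 b hb with hbu
  have key := gaussSum_mulShift χ (ZMod.stdAddChar (N := p)) bu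
  have habs : ‖χ ((bu : ZMod p))‖ = 1 := by
    rw [← MulChar.coe_toUnitHom]
    exact Complex.norm_eq_one_of_mem_rootsOfUnity (χ.apply_mem_rootsOfUnity bu)
  have h2 := congrArg (‖·‖) key
  rw [norm_mul, habs, one_mul, aux_abs_gaussSum hχ] at h2
  rw [h]
  simpa [hbu] using h2

lemma aux_sum_units_eq {M : Type*} [AddCommMonoid M] (f : ZMod p → M) (h0 : f 0 = 0) :
    ∑ x : (ZMod p)ˣ, f x = ∑ x : ZMod p, f x := by
  rw [← Finset.sum_filter_of_ne (p := fun x : ZMod p => x ≠ 0)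
    (fun x _ hx => fun h => hx (by rw [h, h0]))]
  refine Finset.sum_bij (fun (u : (ZMod p)ˣ) _ => (u : ZMod p)) ?_ ?_ ?_ ?_
  · intro u _; simp [Units.ne_zero u]
  · intro u1 _ u2 _ h; exact Units.ext h
  · intro y hy
    simp only [Finset.mem_filter, Finset.mem_univ, true_and] at hy
    exact ⟨Units.mk0 y hy, Finset.mem_univ _, rfl⟩
  · intro u _; rfl

lemma aux_main (p : ℕ) [Fact p.Prime] (j : ℕ) (hj : 1 ≤ j) {b : ZMod p} (hb : b ≠ 0) :
    ‖∑ x : (ZMod p)ˣ, ZMod.stdAddChar (b * (x : ZMod p) ^ j)‖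
      ≤ ((Nat.gcd j (p - 1) : ℝ) - 1) * Real.sqrt p + 1 := by
  classical
  set d := Nat.gcd j (p - 1) with hd
  have hp2 : 2 ≤ p := (Fact.out : p.Prime).two_le
  have hn0 : p - 1 ≠ 0 := by omega
  have hd0 : 0 < d := Nat.gcd_pos_of_pos_left (p - 1) hj
  have hdn : d ∣ p - 1 := Nat.gcd_dvd_right j (p - 1)
  have hdj : d ∣ j := Nat.gcd_dvd_left j (p - 1)
  have hcard : Fintype.card (ZMod p)ˣ = p - 1 := ZMod.card_units p
  obtain ⟨g, hg⟩ := IsCyclic.exists_generator (α := (ZMod p)ˣ)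
  have hgord : orderOf g = p - 1 := by
    rw [orderOf_eq_card_of_forall_mem_zpowers hg, Nat.card_eq_fintype_card, hcard]
  set ζ : ℂ := Complex.exp (2 * Real.pi * Complex.I / d) with hζdef
  have hζ : IsPrimitiveRoot ζ d := Complex.isPrimitiveRoot_exp d (by omega)
  have hζu : (hζ.isUnit hd0.ne').unit ∈ rootsOfUnity (Fintype.card (ZMod p)ˣ) ℂ := by
    rw [mem_rootsOfUnity]
    apply Units.ext
    push_cast
    rw [IsUnit.unit_spec, hcard]
    obtain ⟨c, hc⟩ := hdn
    rw [hc, pow_mul, hζ.pow_eq_one, one_pow]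
  set χ₀ : MulChar (ZMod p) ℂ := MulChar.ofRootOfUnity hζu hg with hχ₀def
  have hχ₀g : χ₀ ↑g = ζ := by
    rw [hχ₀def, MulChar.ofRootOfUnity_spec, IsUnit.unit_spec]
  have hχ₀d : χ₀ ^ d = 1 := by
    rw [MulChar.eq_iff hg]
    rw [MulChar.pow_apply_coe, hχ₀g, hζ.pow_eq_one, MulChar.one_apply_coe]
  rw [aux_key hg hζ hχ₀g hχ₀d hd0 hdj hd hgord b]
  calc ‖∑ k ∈ Finset.range d, ∑ x : (ZMod p)ˣ,
          (χ₀ ^ k) (x : ZMod p) * ZMod.stdAddChar (b * (x : ZMod p))‖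
      ≤ ∑ k ∈ Finset.range d, ‖∑ x : (ZMod p)ˣ,
          (χ₀ ^ k) (x : ZMod p) * ZMod.stdAddChar (b * (x : ZMod p))‖ :=
        norm_sum_le _ _
    _ ≤ ((d : ℝ) - 1) * Real.sqrt p + 1 := by
        have hsplit : Finset.range d = insert 0 (Finset.Ico 1 d) := by
          ext k; simp only [Finset.mem_insert, Finset.mem_Ico, Finset.mem_range]; omega
        rw [hsplit, Finset.sum_insert (by simp)]
        -- the k = 0 term
        have h0term : ‖∑ x : (ZMod p)ˣ,
            (χ₀ ^ 0) (x : ZMod p) * ZMod.stdAddChar (b * (x : ZMod p))‖ = 1 := by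
          have he : ∀ x : (ZMod p)ˣ, (χ₀ ^ 0) ((x : ZMod p)) * ZMod.stdAddChar (b * (x : ZMod p))
              = ZMod.stdAddChar (b * (x : ZMod p)) := by
            intro x; rw [pow_zero, MulChar.one_apply_coe, one_mul]
          rw [Finset.sum_congr rfl (fun x _ => he x)]
          have hfull : (∑ x : ZMod p, ZMod.stdAddChar (b * x)) = 0 := by
            have hne : AddChar.mulShift (ZMod.stdAddChar (N := p)) b ≠ 1 :=
              (ZMod.isPrimitive_stdAddChar p) hb
            have h3 := AddChar.sum_eq_zero_of_ne_one hne
            simpa [AddChar.mulShift_apply] using h3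
          have h2 := aux_sum_units_eq (p := p)
            (fun x => ZMod.stdAddChar (b * x) - (if x = 0 then 1 else 0)) (by simp)
          rw [Finset.sum_sub_distrib, Finset.sum_sub_distrib, hfull,
            Finset.sum_ite_eq' Finset.univ (0 : ZMod p) (fun _ => (1 : ℂ))] at h2
          simp only [Units.ne_zero, if_false, Finset.sum_const_zero, sub_zero,
            Finset.mem_univ, if_true] at h2
          rw [h2]
          simp
        rw [h0term]
        -- the k ≥ 1 terms
        have hterm : ∀ k ∈ Finset.Ico 1 d, ‖∑ x : (ZMod p)ˣ,
            (χ₀ ^ k) (x : ZMod p) * ZMod.stdAddChar (b * (x : ZMod p))‖ = Real.sqrt p := by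
          intro k hk
          obtain ⟨hk1, hkd⟩ := Finset.mem_Ico.mp hk
          have hχk : χ₀ ^ k ≠ 1 := by
            intro hcontra
            have h4 : (χ₀ ^ k) (g : ZMod p) = 1 := by
              rw [hcontra, MulChar.one_apply_coe]
            rw [MulChar.pow_apply_coe, hχ₀g] at h4
            have h5 := hζ.dvd_of_pow_eq_one k h4
            have := Nat.le_of_dvd (by omega) h5
            omega
          have hconv := aux_sum_units_eq (p := p)
            (fun x => (χ₀ ^ k) x * ZMod.stdAddChar (b * x))
            (by simp [MulChar.map_nonunit (χ₀ ^ k) (not_isUnit_zero (M₀ := ZMod p))])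
          rw [hconv]
          exact aux_abs_char_sum hχk hb
        rw [Finset.sum_congr rfl hterm, Finset.sum_const, Nat.card_Ico, nsmul_eq_mul]
        have hcast : ((d - 1 : ℕ) : ℝ) = (d : ℝ) - 1 := by
          rw [Nat.cast_sub hd0]; norm_num
        rw [hcast]
        linarith

end Stmt7Aux

theorem stmt_7 (p : ℕ) (hp : p.Prime) (j : ℕ) (hj : 1 ≤ j) (a : ℤ) (ha : ¬ (p : ℤ) ∣ a) :
    ‖∑ m ∈ (Finset.Icc 1 p).filter (fun m => ¬ p ∣ m),
        Complex.exp (2 * Real.pi * Complex.I * (a * m ^ j / p))‖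
      ≤ ((Nat.gcd j (p - 1) : ℝ) - 1) * Real.sqrt p + 1 := by
  haveI : Fact p.Prime := ⟨hp⟩
  have hb : ((a : ZMod p)) ≠ 0 := by
    rwa [Ne, ZMod.intCast_zmod_eq_zero_iff_dvd]
  rw [aux_front p j a]
  exact aux_main p j hj hb
end

section
/- For a prime $p$ and integer $a$ with $p \nmid a$, the complete exponential sum $S_j(p,a) = \sum_{m=1}^{p} e(am^j/p)$ satisfies $|S_j(p,a)| \leq ((j,p-1)-1)\sqrt{p}$. -/
open Finset

section auxgroup

variable {G : Type*} [CommGroup G] [Fintype G] [DecidableEq G]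

lemma aux_fiber_card_s8 (f : G →* G) {b : G} (hb : b ∈ Finset.univ.image f) :
    {a : G | f a = b}.toFinset.card = {a : G | f a = 1}.toFinset.card := by
  obtain ⟨x0, -, rfl⟩ := Finset.mem_image.mp hb
  apply Finset.card_bij' (fun t _ => x0⁻¹ * t) (fun t _ => x0 * t)
  · intro a ha
    simp only [Set.mem_toFinset, Set.mem_setOf_eq] at ha ⊢
    simp [map_mul, ha]
  · intro a ha
    simp only [Set.mem_toFinset, Set.mem_setOf_eq] at ha ⊢
    simp [map_mul, ha]
  · intro a _; group
  · intro a _; group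

lemma aux_card_pow_eq_one [IsCyclic G] {m : ℕ} (hm : m ∣ Fintype.card G) :
    {x : G | x ^ m = 1}.toFinset.card = m := by
  have hm0 : 0 < m := Nat.pos_of_dvd_of_pos hm Fintype.card_pos
  refine le_antisymm ?_ ?_
  · have := IsCyclic.card_pow_eq_one_le (α := G) hm0
    convert this using 2
    all_goals (ext x; simp)
  · obtain ⟨g, hg⟩ := IsCyclic.exists_ofOrder_eq_natCard (α := G)
    rw [Nat.card_eq_fintype_card] at hg
    have hx : orderOf (g ^ (orderOf g / m)) = m :=
      orderOf_pow_orderOf_div (by rw [hg]; exact Fintype.card_pos.ne') (hg ▸ hm)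
    set x := g ^ (orderOf g / m) with hxdef
    have hxm : x ^ m = 1 := by rw [← hx]; exact pow_orderOf_eq_one x
    have hsub : Finset.univ.image (fun k : Fin m => x ^ (k : ℕ)) ⊆ {y : G | y ^ m = 1}.toFinset := by
      intro y hy
      obtain ⟨k, -, rfl⟩ := Finset.mem_image.mp hy
      simp only [Set.mem_toFinset, Set.mem_setOf_eq]
      rw [← pow_mul, mul_comm, pow_mul, hxm, one_pow]
    have hcard : (Finset.univ.image (fun k : Fin m => x ^ (k : ℕ))).card = m := by
      rw [Finset.card_image_of_injOn (fun i _ k _ hik => by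
        have := pow_inj_mod.mp hik
        rw [hx, Nat.mod_eq_of_lt i.2, Nat.mod_eq_of_lt k.2] at this
        exact Fin.ext this), Finset.card_univ, Fintype.card_fin]
    calc m = _ := hcard.symm
    _ ≤ _ := Finset.card_le_card hsub

lemma aux_sum_comp (f : G →* G) (F : G → ℂ) :
    ∑ x, F (f x) = ({x : G | f x = 1}.toFinset.card : ℂ) * ∑ y ∈ Finset.univ.image f, F y := by
  classical
  rw [Finset.sum_comp F f, Finset.mul_sum]
  refine Finset.sum_congr rfl fun b hb => ?_
  rw [nsmul_eq_mul]
  congr 2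
  rw [← aux_fiber_card_s8 f hb]
  congr 1
  ext x; simp

lemma aux_card_image (f : G →* G) :
    (Finset.univ.image f).card * {x : G | f x = 1}.toFinset.card = Fintype.card G := by
  classical
  have := Finset.card_eq_sum_card_image f (Finset.univ : Finset G)
  rw [Finset.card_univ] at this
  rw [this, Finset.card_eq_sum_ones (Finset.univ.image f) , Finset.sum_mul, one_mul]
  refine Finset.sum_congr rfl fun b hb => ?_
  rw [← aux_fiber_card_s8 f hb]
  congr 1
  ext x; simp

end auxgroup

lemma aux_ker_pow {G : Type*} [CommGroup G] [Fintype G] [DecidableEq G] [IsCyclic G] (j : ℕ) :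
    {x : G | x ^ j = 1}.toFinset.card = Nat.gcd j (Fintype.card G) := by
  have hset : {x : G | x ^ j = 1} = {x : G | x ^ (Nat.gcd j (Fintype.card G)) = 1} := by
    ext x
    simp only [Set.mem_setOf_eq]
    constructor
    · intro h
      exact orderOf_dvd_iff_pow_eq_one.mp
        (Nat.dvd_gcd (orderOf_dvd_of_pow_eq_one h) (orderOf_dvd_of_pow_eq_one (pow_card_eq_one)))
    · intro h
      obtain ⟨c, hc⟩ := Nat.gcd_dvd_left j (Fintype.card G)
      rw [hc, pow_mul, h, one_pow]
  rw [Set.toFinset_congr hset, aux_card_pow_eq_one (Nat.gcd_dvd_right j (Fintype.card G))]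

lemma aux_image_pow {G : Type*} [CommGroup G] [Fintype G] [DecidableEq G] [IsCyclic G] (j : ℕ) :
    Finset.univ.image (powMonoidHom j : G →* G) =
      {y : G | y ^ (Fintype.card G / Nat.gcd j (Fintype.card G)) = 1}.toFinset := by
  set n := Fintype.card G
  set d := Nat.gcd j n with hd
  have hdn : d ∣ n := Nat.gcd_dvd_right j n
  have hdj : d ∣ j := Nat.gcd_dvd_left j n
  have hd0 : 0 < d := Nat.gcd_pos_of_pos_right j Fintype.card_pos
  refine Finset.eq_of_subset_of_card_le ?_ ?_
  · intro y hy
    obtain ⟨x, -, rfl⟩ := Finset.mem_image.mp hy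
    simp only [Set.mem_toFinset, Set.mem_setOf_eq, powMonoidHom_apply]
    obtain ⟨c, hc⟩ := hdj
    have hJ : j * (n / d) = n * c := by
      rw [hc, mul_comm d c, mul_assoc, Nat.mul_div_cancel' hdn, mul_comm]
    rw [← pow_mul, hJ, pow_mul, pow_card_eq_one, one_pow]
  · have h1 := aux_card_image (powMonoidHom j : G →* G)
    have h2 : {x : G | powMonoidHom j x = 1}.toFinset.card = d := by
      have := aux_ker_pow (G := G) j
      simpa only [powMonoidHom_apply] using this
    rw [h2] at h1
    rw [aux_card_pow_eq_one (Nat.div_dvd_of_dvd hdn)]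
    have h3 : Fintype.card G / d = (Finset.univ.image (powMonoidHom j : G →* G)).card :=
      Nat.div_eq_of_eq_mul_left hd0 h1.symm
    omega

lemma aux_gauss_abs {p : ℕ} [Fact p.Prime] {χ : MulChar (ZMod p) ℂ} (hχ : χ ≠ 1)
    {ψ : AddChar (ZMod p) ℂ} (hψ : ψ ≠ 1) (hcirc : ∀ x, ‖ψ x‖ = 1) :
    ‖gaussSum χ ψ‖ = Real.sqrt p := by
  have hprim : ψ.IsPrimitive := AddChar.IsPrimitive.of_ne_one hψ
  have key := gaussSum_mul_gaussSum_eq_card hχ hprim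
  have hconj : gaussSum χ⁻¹ ψ⁻¹ = (starRingEnd ℂ) (gaussSum χ ψ) := by
    rw [gaussSum, gaussSum, map_sum]
    refine Finset.sum_congr rfl fun x _ => ?_
    rw [map_mul]
    congr 1
    · exact (MulChar.star_apply' χ x).symm
    · rw [AddChar.inv_apply]
      have h1 : ψ x * ψ (-x) = 1 := by rw [← AddChar.map_add_eq_mul]; simp
      rw [eq_comm, ← Complex.inv_eq_conj (hcirc x)]
      exact (eq_inv_of_mul_eq_one_left (by rw [mul_comm] at h1; exact h1)).symm
  rw [hconj, Complex.mul_conj] at key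
  have hcard : (Fintype.card (ZMod p) : ℂ) = (p : ℂ) := by
    rw [ZMod.card p]
  rw [hcard] at key
  have : Complex.normSq (gaussSum χ ψ) = (p : ℝ) := by
    exact_mod_cast key
  rw [Complex.norm_def, this]

lemma aux_split {p : ℕ} [Fact p.Prime] (F : ZMod p → ℂ) :
    ∑ x : ZMod p, F x = F 0 + ∑ u : (ZMod p)ˣ, F u := by
  classical
  rw [← Finset.add_sum_erase _ F (Finset.mem_univ 0)]
  congr 1
  refine (Finset.sum_nbij' (i := fun u : (ZMod p)ˣ => (u : ZMod p))
    (j := fun x : ZMod p => if h : x = 0 then 1 else Units.mk0 x h) ?_ ?_ ?_ ?_ ?_).symm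
  · intro u _
    simp [Units.ne_zero u]
  · intro x hx
    exact Finset.mem_univ _
  · intro u _
    simp [Units.ne_zero u]
  · intro x hx
    have hx0 : x ≠ 0 := Finset.ne_of_mem_erase hx
    simp [hx0]
  · intro u _
    rfl


lemma aux_step1 (p : ℕ) [Fact p.Prime] (j : ℕ) (hj : 1 ≤ j) (a : ℤ) :
    (∑ m ∈ Finset.Icc 1 p, Complex.exp (2 * Real.pi * Complex.I * (a * m ^ j / p)))
      = ∑ x : ZMod p, (ZMod.stdAddChar.mulShift (a : ZMod p)) (x ^ j) := by
  have hp : p.Prime := Fact.out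
  haveI : NeZero p := ⟨hp.pos.ne'⟩
  refine Finset.sum_nbij' (i := fun m : ℕ => (m : ZMod p))
    (j := fun x : ZMod p => if x = 0 then p else x.val) ?_ ?_ ?_ ?_ ?_
  · intro m _; exact Finset.mem_univ _
  · intro x _
    by_cases h : x = 0 <;> simp only [h, if_true, if_false, Finset.mem_Icc]
    · exact ⟨hp.one_lt.le.trans' (by norm_num), le_rfl⟩
    · have h1 : x.val ≠ 0 := fun h0 => h ((ZMod.val_eq_zero x).mp h0)
      have h2 : x.val < p := ZMod.val_lt x
      omega
  · intro m hm
    rw [Finset.mem_Icc] at hm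
    by_cases h : (m : ZMod p) = 0
    · simp only [h, if_true]
      have hdvd : p ∣ m := (ZMod.natCast_eq_zero_iff m p).mp h
      exact (Nat.le_antisymm (Nat.le_of_dvd (by omega) hdvd) hm.2).symm ▸ rfl
    · simp only [h, if_false]
      have hmp : m ≠ p := fun he => h (by rw [he]; exact_mod_cast ZMod.natCast_self p)
      rw [ZMod.val_natCast_of_lt (by omega)]
  · intro x _
    by_cases h : x = 0 <;> simp [h]
  · intro m _
    rw [AddChar.mulShift_apply]
    have h1 : (a : ZMod p) * (m : ZMod p) ^ j = ((a * m ^ j : ℤ) : ZMod p) := by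
      push_cast; ring
    rw [h1, ZMod.stdAddChar_coe]
    congr 1
    push_cast
    ring

theorem stmt_8 (p : ℕ) (hp : p.Prime) (j : ℕ) (hj : 1 ≤ j) (a : ℤ) (ha : ¬ (p : ℤ) ∣ a) :
    ‖∑ m ∈ Finset.Icc 1 p,
        Complex.exp (2 * Real.pi * Complex.I * (a * m ^ j / p))‖
      ≤ ((Nat.gcd j (p - 1) : ℝ) - 1) * Real.sqrt p := by
  haveI : Fact p.Prime := ⟨hp⟩
  haveI : NeZero p := ⟨hp.pos.ne'⟩
  haveI : NeZero (Monoid.exponent (ZMod p)ˣ) := ⟨Monoid.exponent_ne_zero_of_finite⟩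
  haveI : DecidableEq (MulChar (ZMod p) ℂ) := Classical.decEq _
  haveI : IsCyclic (MulChar (ZMod p) ℂ) := by
    have e := MulChar.equiv_rootsOfUnity (ZMod p) ℂ
    exact isCyclic_of_surjective e.symm e.symm.surjective
  -- notation
  set n := p - 1 with hn
  set d := Nat.gcd j n with hd
  set e := n / d with he
  have hn_pos : 0 < n := by have := hp.two_le; omega
  have hdn : d ∣ n := Nat.gcd_dvd_right j n
  have hdj : d ∣ j := Nat.gcd_dvd_left j n
  have hd0 : 0 < d := Nat.gcd_pos_of_pos_right j hn_pos
  have hde : d * e = n := Nat.mul_div_cancel' hdn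
  have he0 : 0 < e := Nat.div_pos (Nat.le_of_dvd hn_pos hdn) hd0
  have hen : e ∣ n := Nat.div_dvd_of_dvd hdn
  have hcardG : Fintype.card (ZMod p)ˣ = n := by
    rw [ZMod.card_units_eq_totient, Nat.totient_prime hp]
  have hcardC : Fintype.card (MulChar (ZMod p) ℂ) = n := by
    rw [← Nat.card_eq_fintype_card,
      DirichletCharacter.card_eq_totient_of_hasEnoughRootsOfUnity ℂ p, Nat.totient_prime hp]
  -- the additive character
  set ψ : AddChar (ZMod p) ℂ := ZMod.stdAddChar.mulShift (a : ZMod p) with hψ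
  have haz : (a : ZMod p) ≠ 0 := fun h => ha ((ZMod.intCast_zmod_eq_zero_iff_dvd a p).mp h)
  have hψne : ψ ≠ 1 := ZMod.isPrimitive_stdAddChar p haz
  have hcirc : ∀ x, ‖ψ x‖ = 1 := fun x => by
    rw [hψ, AddChar.mulShift_apply, ZMod.stdAddChar_apply, Circle.norm_coe]
  have hψ0 : ψ 0 = 1 := AddChar.map_zero_eq_one ψ
  have hψsum : ∑ u : (ZMod p)ˣ, ψ (u : ZMod p) = -1 := by
    have h0 := aux_split (fun x : ZMod p => ψ x)
    rw [AddChar.sum_eq_zero_of_ne_one hψne] at h0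
    simp only [hψ0] at h0
    exact eq_neg_of_add_eq_zero_right h0.symm
  -- the S function
  set S : MulChar (ZMod p) ℂ → ℂ := fun χ => ∑ u : (ZMod p)ˣ, χ (u : ZMod p) * ψ (u : ZMod p)
    with hS
  set Ke : Finset (ZMod p)ˣ := {u : (ZMod p)ˣ | u ^ e = 1}.toFinset with hKe
  set Sig1 : ℂ := ∑ u ∈ Ke, ψ (u : ZMod p) with hSig1
  set I : Finset (MulChar (ZMod p) ℂ) :=
    Finset.univ.image (powMonoidHom e : MulChar (ZMod p) ℂ →* MulChar (ZMod p) ℂ) with hI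
  -- Claim A
  have claimA : ∑ η : MulChar (ZMod p) ℂ, S (η ^ e) = (n : ℂ) * Sig1 := by
    have hterm : ∀ η : MulChar (ZMod p) ℂ, S (η ^ e)
        = ∑ u : (ZMod p)ˣ, η (((u : ZMod p)) ^ e) * ψ (u : ZMod p) := by
      intro η
      refine Finset.sum_congr rfl fun u _ => ?_
      rw [MulChar.pow_apply_coe, map_pow]
    calc ∑ η : MulChar (ZMod p) ℂ, S (η ^ e)
        = ∑ η : MulChar (ZMod p) ℂ, ∑ u : (ZMod p)ˣ, η (((u : ZMod p)) ^ e) * ψ (u : ZMod p) :=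
          Finset.sum_congr rfl fun η _ => hterm η
      _ = ∑ u : (ZMod p)ˣ, (∑ η : MulChar (ZMod p) ℂ, η (((u : ZMod p)) ^ e)) * ψ (u : ZMod p) := by
          rw [Finset.sum_comm]
          exact Finset.sum_congr rfl fun u _ => by rw [Finset.sum_mul]
      _ = ∑ u : (ZMod p)ˣ, (if u ^ e = 1 then (n : ℂ) else 0) * ψ (u : ZMod p) := by
          refine Finset.sum_congr rfl fun u _ => ?_
          congr 1
          rw [DirichletCharacter.sum_characters_eq (R := ℂ)]
          have : ((u : ZMod p)) ^ e = 1 ↔ u ^ e = 1 := by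
            rw [← Units.val_pow_eq_pow_val, Units.val_eq_one]
          simp only [this, Nat.totient_prime hp, ← hn]
      _ = (n : ℂ) * Sig1 := by
          rw [hSig1, Finset.mul_sum]
          have hKe' : Ke = Finset.univ.filter (fun u : (ZMod p)ˣ => u ^ e = 1) := by
            rw [hKe]; ext u; simp
          rw [hKe', Finset.sum_filter]
          refine Finset.sum_congr rfl fun u _ => ?_
          split_ifs <;> simp
  -- Claim B
  have hkerC : {χ : MulChar (ZMod p) ℂ | powMonoidHom e χ = 1}.toFinset.card = e := by
    have h1 : {χ : MulChar (ZMod p) ℂ | powMonoidHom e χ = 1}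
        = {χ : MulChar (ZMod p) ℂ | χ ^ e = 1} := by
      ext χ; simp [powMonoidHom_apply]
    rw [Set.toFinset_congr h1, aux_card_pow_eq_one (hcardC ▸ hen)]
  have claimB : ∑ η : MulChar (ZMod p) ℂ, S (η ^ e) = (e : ℂ) * ∑ χ ∈ I, S χ := by
    have := aux_sum_comp (powMonoidHom e : MulChar (ZMod p) ℂ →* MulChar (ZMod p) ℂ) S
    simp only [powMonoidHom_apply] at this
    rw [this, aux_card_pow_eq_one (hcardC ▸ hen), hI]
  -- combine A and B
  have hXS : ∑ χ ∈ I, S χ = (d : ℂ) * Sig1 := by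
    have hcast : (n : ℂ) = (e : ℂ) * ((d : ℂ)) := by
      rw [← hde]; push_cast; ring
    have hne : (e : ℂ) ≠ 0 := Nat.cast_ne_zero.mpr he0.ne'
    apply mul_left_cancel₀ hne
    rw [← claimB, claimA, hcast, mul_assoc]
  -- Claim C
  have claimC : ∑ u : (ZMod p)ˣ, ψ ((u : ZMod p) ^ j) = (d : ℂ) * Sig1 := by
    have h1 : ∀ u : (ZMod p)ˣ, ψ ((u : ZMod p) ^ j) = ψ (((powMonoidHom j u : (ZMod p)ˣ) : ZMod p)) := by
      intro u
      rw [powMonoidHom_apply, Units.val_pow_eq_pow_val]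
    have h2 := aux_sum_comp (powMonoidHom j : (ZMod p)ˣ →* (ZMod p)ˣ)
      (fun u : (ZMod p)ˣ => ψ (u : ZMod p))
    have h3 : {u : (ZMod p)ˣ | powMonoidHom j u = 1}.toFinset.card = d := by
      have hs : {u : (ZMod p)ˣ | powMonoidHom j u = 1}
          = {u : (ZMod p)ˣ | u ^ j = 1} := by
        ext u; simp [powMonoidHom_apply]
      rw [Set.toFinset_congr hs, aux_ker_pow j, hcardG]
    have h4 : Finset.univ.image (powMonoidHom j : (ZMod p)ˣ →* (ZMod p)ˣ) = Ke := by
      rw [aux_image_pow j, hKe]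
      apply Set.toFinset_congr
      rw [hcardG]
    calc ∑ u : (ZMod p)ˣ, ψ ((u : ZMod p) ^ j)
        = ∑ u : (ZMod p)ˣ, ψ (((powMonoidHom j u : (ZMod p)ˣ) : ZMod p)) :=
          Finset.sum_congr rfl fun u _ => h1 u
      _ = (d : ℂ) * Sig1 := by rw [h2, h3, h4, hSig1]
  -- cardinality of I
  have hcardI : I.card = d := by
    have h1 := aux_card_image (powMonoidHom e : MulChar (ZMod p) ℂ →* MulChar (ZMod p) ℂ)
    rw [hkerC, hcardC, ← hde] at h1
    exact Nat.eq_of_mul_eq_mul_right he0 h1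
  have h1I : (1 : MulChar (ZMod p) ℂ) ∈ I := by
    rw [hI]
    exact Finset.mem_image.mpr ⟨1, Finset.mem_univ _, map_one _⟩
  have hS1 : S 1 = -1 := by
    rw [hS]
    calc ∑ u : (ZMod p)ˣ, (1 : MulChar (ZMod p) ℂ) (u : ZMod p) * ψ (u : ZMod p)
        = ∑ u : (ZMod p)ˣ, ψ (u : ZMod p) := by
          refine Finset.sum_congr rfl fun u _ => ?_
          rw [MulChar.one_apply_coe, one_mul]
      _ = -1 := hψsum
  -- the main sum
  have hT : (∑ m ∈ Finset.Icc 1 p, Complex.exp (2 * Real.pi * Complex.I * (a * m ^ j / p)))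
      = ∑ χ ∈ I.erase 1, S χ := by
    rw [aux_step1 p j hj a, ← hψ]
    rw [aux_split (fun x : ZMod p => ψ (x ^ j))]
    have h0 : (0 : ZMod p) ^ j = 0 := zero_pow (by omega)
    rw [h0, hψ0, claimC, ← hXS, ← Finset.add_sum_erase _ S h1I, hS1]
    ring
  rw [hT]
  -- final bound
  have habs : ∀ χ ∈ I.erase 1, ‖S χ‖ = Real.sqrt p := by
    intro χ hχ
    have hχ1 : χ ≠ 1 := Finset.ne_of_mem_erase hχ
    have hgs : S χ = gaussSum χ ψ := by
      rw [gaussSum, aux_split (fun x : ZMod p => χ x * ψ x)]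
      rw [MulChar.map_nonunit χ not_isUnit_zero, zero_mul, zero_add, hS]
    rw [hgs]
    exact aux_gauss_abs hχ1 hψne hcirc
  calc ‖∑ χ ∈ I.erase 1, S χ‖
      ≤ ∑ χ ∈ I.erase 1, ‖S χ‖ := norm_sum_le _ _
    _ = ∑ χ ∈ I.erase 1, Real.sqrt p := Finset.sum_congr rfl habs
    _ = ((I.erase 1).card : ℝ) * Real.sqrt p := by rw [Finset.sum_const, nsmul_eq_mul]
    _ = ((d : ℝ) - 1) * Real.sqrt p := by
        rw [Finset.card_erase_of_mem h1I, hcardI]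
        congr 1
        have : (1 : ℕ) ≤ d := hd0
        push_cast [Nat.cast_sub this]
        ring
end
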